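/- Let f : [a,b] → ℝ be continuous and integrable on [a,b] with 0 ≤ a < b, let k > 1, and suppose |f|^{k/(k-1)} is convex on [a,b]. Then for any fixed p, q > 0, ∫_a^b (x-a)^p (b-x)^q f(x) dx ≤ (b-a)^{p+q+1} 2^{-(k-1)/k} [β(kp+1, kq+1)]^{1/k} [|f(a)|^{k/(k-1)} + |f(b)|^{k/(k-1)}]^{(k-1)/k}. -/

import Mathlib

open Real Set MeasureTheory intervalIntegral

noncomputable def beta (x y : ℝ) : ℝ := ∫ t in (0:ℝ)..1, t ^ (x-1) * (1-t) ^ (y-1)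

/-- Substitution formula: `∫_a^b (x-a)^r (b-x)^s dx = (b-a)^{r+s+1} β(r+1, s+1)`. -/
lemma integral_weight_eq (a b : ℝ) (hab : a < b) (r s : ℝ) (hr : 0 < r) (hs : 0 < s) :
    ∫ x in a..b, (x-a)^r * (b-x)^s = (b-a)^(r+s+1) * beta (r+1) (s+1) := by
  have hba : (0:ℝ) < b - a := by linarith
  have key := intervalIntegral.smul_integral_comp_add_mul
      (fun x : ℝ => (x-a)^r * (b-x)^s) (a := 0) (b := 1) (b-a) a
  simp only [mul_zero, add_zero, mul_one, add_sub_cancel] at key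
  rw [← key]
  have hcongr : ∫ t in (0:ℝ)..1, (a + (b-a)*t - a)^r * (b - (a + (b-a)*t))^s
      = ∫ t in (0:ℝ)..1, ((b-a)^r * (b-a)^s) * (t^((r+1)-1) * (1-t)^((s+1)-1)) := by
    apply intervalIntegral.integral_congr
    intro t ht
    rw [Set.uIcc_of_le (by norm_num : (0:ℝ) ≤ 1)] at ht
    have ht0 : 0 ≤ t := ht.1
    have ht1 : 0 ≤ 1 - t := by linarith [ht.2]
    have h1 : a + (b-a)*t - a = (b-a)*t := by ring
    have h2 : b - (a + (b-a)*t) = (b-a)*(1-t) := by ring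
    simp only [h1, h2]
    rw [Real.mul_rpow hba.le ht0, Real.mul_rpow hba.le ht1]
    simp only [add_sub_cancel_right]
    ring
  rw [hcongr, intervalIntegral.integral_const_mul]
  rw [smul_eq_mul, beta]
  rw [show r + s + 1 = 1 + (r + s) by ring, Real.rpow_add hba, Real.rpow_one,
    Real.rpow_add hba]
  ring

/-- Trapezoid bound for convex functions. -/
lemma integral_le_trapezoid (a b : ℝ) (hab : a < b) (g : ℝ → ℝ)
    (hg : ConvexOn ℝ (Set.Icc a b) g) (hgi : IntervalIntegrable g volume a b) :
    ∫ x in a..b, g x ≤ (b - a) * (g a + g b) / 2 := by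
  have hba : (0:ℝ) < b - a := by linarith
  set L : ℝ → ℝ := fun x => g a + (x - a) * ((g b - g a) / (b - a)) with hL
  have hLi : IntervalIntegrable L volume a b := by
    apply Continuous.intervalIntegrable
    continuity
  have hle : ∫ x in a..b, g x ≤ ∫ x in a..b, L x := by
    apply intervalIntegral.integral_mono_on hab.le hgi hLi
    intro x hx
    have hxa : a ≤ x := hx.1
    have hxb : x ≤ b := hx.2
    set t : ℝ := (x - a) / (b - a) with htdef
    have ht0 : 0 ≤ t := div_nonneg (by linarith) hba.le
    have ht1 : t ≤ 1 := by
      rw [div_le_one hba]; linarith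
    have hx' : (1 - t) • a + t • b = x := by
      rw [htdef, smul_eq_mul, smul_eq_mul]; field_simp; ring
    have := hg.2 (Set.left_mem_Icc.2 hab.le) (Set.right_mem_Icc.2 hab.le)
      (by linarith : (0:ℝ) ≤ 1 - t) ht0 (by ring)
    rw [hx'] at this
    calc g x ≤ (1 - t) * g a + t * g b := this
      _ = L x := by
          rw [hL]; simp only [htdef]; field_simp; ring
  refine hle.trans ?_
  have h1 : ∫ x in a..b, L x
      = (∫ x in a..b, g a) + ((g b - g a) / (b - a)) * ∫ x in a..b, (x - a) := by
    rw [hL, ← intervalIntegral.integral_const_mul]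
    rw [← intervalIntegral.integral_add (intervalIntegrable_const)]
    · simp only [mul_comm]
    · apply Continuous.intervalIntegrable; continuity
  have h2 : ∫ x in a..b, (x - a) = (b - a)^2 / 2 := by
    have : ∫ x in a..b, (x - a) = (∫ x in a..b, x) - ∫ x in a..b, (a:ℝ) := by
      apply intervalIntegral.integral_sub
      · exact Continuous.intervalIntegrable continuous_id a b
      · exact intervalIntegrable_const
    rw [this, integral_id, intervalIntegral.integral_const, smul_eq_mul]
    ring
  rw [h1, h2, intervalIntegral.integral_const, smul_eq_mul]
  apply le_of_eq
  field_simp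
  ring

/-- A function continuous on `Icc a b` is in every `ℒr` on `volume.restrict (Ioc a b)`. -/
lemma memLp_of_continuousOn {a b : ℝ} (g : ℝ → ℝ) (hg : ContinuousOn g (Set.Icc a b))
    (r : ENNReal) : MemLp g r (volume.restrict (Set.Ioc a b)) := by
  haveI : IsFiniteMeasure (volume.restrict (Set.Ioc a b)) :=
    ⟨by rw [Measure.restrict_apply_univ]; exact measure_Ioc_lt_top⟩
  obtain ⟨C, hC⟩ := isCompact_Icc.exists_bound_of_continuousOn hg
  refine MemLp.of_bound ?_ C ?_
  · exact (hg.mono Set.Ioc_subset_Icc_self).aestronglyMeasurable measurableSet_Ioc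
  · exact (ae_restrict_mem measurableSet_Ioc).mono fun x hx => hC x (Set.Ioc_subset_Icc_self hx)

theorem stmt8 (a b p q : ℝ) (f : ℝ → ℝ)
    (ha : 0 ≤ a) (hab : a < b) (hp : 0 < p) (hq : 0 < q)
    (hcont : ContinuousOn f (Set.Icc a b))
    (hint : IntervalIntegrable f volume a b)
    (k : ℝ) (hk : 1 < k)
    (hf : ConvexOn ℝ (Set.Icc a b) (fun x => |f x| ^ (k/(k-1)))) :
    ∫ x in a..b, (x-a)^p * (b-x)^q * f x
      ≤ (b-a)^(p+q+1) * (2:ℝ)^(-((k-1)/k)) * (beta (k*p+1) (k*q+1))^(1/k)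
          * (|f a| ^ (k/(k-1)) + |f b| ^ (k/(k-1))) ^ ((k-1)/k) := by
  have hba : (0:ℝ) < b - a := by linarith
  have hk0 : (0:ℝ) < k := by linarith
  have hk1 : (0:ℝ) < k - 1 := by linarith
  set k' : ℝ := k / (k - 1) with hk'def
  have hk'0 : 0 < k' := div_pos hk0 hk1
  have hconj : k.HolderConjugate k' := Real.holderConjugate_iff.2 ⟨hk, by rw [hk'def, inv_div]; field_simp; ring⟩
  set w : ℝ → ℝ := fun x => (x-a)^p * (b-x)^q with hwdef
  set g : ℝ → ℝ := fun x => |f x| ^ k' with hgdef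
  -- continuity facts
  have hwc : Continuous w := by
    apply Continuous.mul
    · exact (Real.continuous_rpow_const hp.le).comp (continuous_id.sub continuous_const)
    · exact (Real.continuous_rpow_const hq.le).comp (continuous_const.sub continuous_id)
  have hgc : ContinuousOn g (Set.Icc a b) := by
    apply ContinuousOn.rpow_const hcont.abs
    intro x _; exact Or.inr hk'0.le
  have hwnn : ∀ x ∈ Set.Icc a b, 0 ≤ w x := fun x hx =>
    mul_nonneg (Real.rpow_nonneg (by linarith [hx.1]) p)
      (Real.rpow_nonneg (by linarith [hx.2]) q)
  -- Step 1: bound by the integral with |f|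
  have step1 : ∫ x in a..b, (x-a)^p * (b-x)^q * f x ≤ ∫ x in a..b, w x * |f x| := by
    apply intervalIntegral.integral_mono_on hab.le
    · exact ((hwc.continuousOn.mul hcont).intervalIntegrable_of_Icc hab.le)
    · exact ((hwc.continuousOn.mul hcont.abs).intervalIntegrable_of_Icc hab.le)
    · intro x hx
      exact mul_le_mul_of_nonneg_left (le_abs_self _) (hwnn x hx)
  -- Step 2: Hölder
  set μ := volume.restrict (Set.Ioc a b) with hμ
  have step2 : ∫ x in a..b, w x * |f x|
      ≤ (∫ x, ‖w x‖ ^ k ∂μ) ^ (1/k) * (∫ x, ‖f x‖ ^ k' ∂μ) ^ (1/k') := by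
    rw [intervalIntegral.integral_of_le hab.le]
    have heq : ∫ x in Set.Ioc a b, w x * |f x| = ∫ x, ‖w x‖ * ‖f x‖ ∂μ := by
      apply setIntegral_congr_fun measurableSet_Ioc
      intro x hx
      simp only [Real.norm_eq_abs]
      rw [abs_of_nonneg (hwnn x (Set.Ioc_subset_Icc_self hx))]
    rw [heq]
    exact MeasureTheory.integral_mul_norm_le_Lp_mul_Lq hconj
      (memLp_of_continuousOn w hwc.continuousOn _)
      (memLp_of_continuousOn f hcont _)
  -- Evaluate the first factor
  have hA : ∫ x, ‖w x‖ ^ k ∂μ = (b-a)^(k*p+k*q+1) * beta (k*p+1) (k*q+1) := by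
    have heq : ∫ x, ‖w x‖ ^ k ∂μ = ∫ x in Set.Ioc a b, (x-a)^(k*p) * (b-x)^(k*q) := by
      apply setIntegral_congr_fun measurableSet_Ioc
      intro x hx
      have hx' := Set.Ioc_subset_Icc_self hx
      simp only [Real.norm_eq_abs]
      rw [abs_of_nonneg (hwnn x hx'), hwdef]
      simp only
      rw [Real.mul_rpow (Real.rpow_nonneg (by linarith [hx'.1]) p)
        (Real.rpow_nonneg (by linarith [hx'.2]) q),
        ← Real.rpow_mul (by linarith [hx'.1]), ← Real.rpow_mul (by linarith [hx'.2]),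
        mul_comm p k, mul_comm q k]
    rw [heq, ← intervalIntegral.integral_of_le hab.le,
      integral_weight_eq a b hab (k*p) (k*q) (mul_pos hk0 hp) (mul_pos hk0 hq)]
  -- Bound the second factor
  have hB : ∫ x, ‖f x‖ ^ k' ∂μ ≤ (b - a) * (g a + g b) / 2 := by
    have heq : ∫ x, ‖f x‖ ^ k' ∂μ = ∫ x in a..b, g x := by
      rw [intervalIntegral.integral_of_le hab.le]
      apply setIntegral_congr_fun measurableSet_Ioc
      intro x _
      simp only [Real.norm_eq_abs, hgdef]
    rw [heq]
    exact integral_le_trapezoid a b hab g hf (hgc.intervalIntegrable_of_Icc hab.le)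
  have hBnn : 0 ≤ ∫ x, ‖f x‖ ^ k' ∂μ :=
    integral_nonneg fun x => Real.rpow_nonneg (norm_nonneg _) _
  have hbeta_nn : 0 ≤ beta (k*p+1) (k*q+1) := by
    apply intervalIntegral.integral_nonneg (by norm_num : (0:ℝ) ≤ 1)
    intro t ht
    exact mul_nonneg (Real.rpow_nonneg ht.1 _) (Real.rpow_nonneg (by linarith [ht.2]) _)
  have hgann : 0 ≤ g a := Real.rpow_nonneg (abs_nonneg _) _
  have hgbnn : 0 ≤ g b := Real.rpow_nonneg (abs_nonneg _) _
  have hAnn : (0:ℝ) ≤ (∫ x, ‖w x‖ ^ k ∂μ) ^ (1/k) := Real.rpow_nonneg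
    (integral_nonneg fun x => Real.rpow_nonneg (norm_nonneg _) _) _
  -- combine
  have step3 : (∫ x, ‖w x‖ ^ k ∂μ) ^ (1/k) * (∫ x, ‖f x‖ ^ k' ∂μ) ^ (1/k')
      ≤ (∫ x, ‖w x‖ ^ k ∂μ) ^ (1/k) * ((b - a) * (g a + g b) / 2) ^ (1/k') :=
    mul_le_mul_of_nonneg_left (Real.rpow_le_rpow hBnn hB (by positivity)) hAnn
  refine step1.trans (step2.trans (step3.trans ?_))
  -- now pure computation with rpow
  have hik' : 1/k' = (k-1)/k := by
    rw [hk'def]; field_simp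
  rw [hA, hik']
  have e1 : ((b-a)^(k*p+k*q+1) * beta (k*p+1) (k*q+1)) ^ (1/k)
      = (b-a)^((k*p+k*q+1)*(1/k)) * (beta (k*p+1) (k*q+1)) ^ (1/k) := by
    rw [Real.mul_rpow (Real.rpow_nonneg hba.le _) hbeta_nn, ← Real.rpow_mul hba.le]
  have e2 : ((b - a) * (g a + g b) / 2) ^ ((k-1)/k)
      = (b-a)^((k-1)/k) * (2:ℝ)^(-((k-1)/k)) * (g a + g b) ^ ((k-1)/k) := by
    rw [show (b - a) * (g a + g b) / 2 = (b-a) * (2:ℝ)⁻¹ * (g a + g b) by ring]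
    rw [Real.mul_rpow (by positivity) (by positivity),
      Real.mul_rpow hba.le (by positivity),
      Real.inv_rpow (by norm_num), ← Real.rpow_neg (by norm_num)]
  rw [e1, e2]
  have e3 : (b-a)^((k*p+k*q+1)*(1/k)) * (b-a)^((k-1)/k) = (b-a)^(p+q+1) := by
    rw [← Real.rpow_add hba]
    congr 1
    field_simp
    ring
  have hfeq : (|f a| ^ (k/(k-1)) + |f b| ^ (k/(k-1))) = g a + g b := rfl
  rw [hfeq, ← e3]
  apply le_of_eq
  ring
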